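/- If G is a path-forest of order n with t components where t ≤ ⌈√n⌉, then b(G) ≤ ⌈√n + (t-1)/2⌉. -/

import Mathlib

open Finset

namespace BurnAux

def cov (A : Finset ℕ) : ℕ := ∑ r ∈ A, (2*r+1)

lemma cov_range (M : ℕ) : cov (Finset.range M) = M^2 := by
  induction M with
  | zero => simp [cov]
  | succ m ih => rw [cov, Finset.sum_range_succ, ← cov, ih]; ring

lemma cov_sdiff {A B : Finset ℕ} (h : A ⊆ B) : cov (B \ A) + cov A = cov B := by
  unfold cov; exact Finset.sum_sdiff h

lemma cov_le_of_subset {A B : Finset ℕ} (h : A ⊆ B) : cov A ≤ cov B := by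
  unfold cov; exact Finset.sum_le_sum_of_subset h

lemma peel : ∀ (T : ℕ) (F : Finset ℕ) (d : ℕ), F ⊆ range T →
    d + 2*F.card + 1 ≤ cov (range T \ F) →
    ∃ (A F' : Finset ℕ) (T' : ℕ), A ⊆ range T \ F ∧ d ≤ cov A ∧ cov A ≤ d + 2*F.card + 1 ∧
      (range T \ F) \ A = range T' \ F' ∧ F' ⊆ range T' ∧ F'.card ≤ F.card + 1 := by
  intro T
  induction T using Nat.strong_induction_on with
  | _ T ih =>
    intro F d hF hcov
    rcases Nat.eq_zero_or_pos d with hd | hd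
    · refine ⟨∅, F, T, by simp, by simp [hd, cov], by simp [cov], by simp, hF, by omega⟩
    · have hne : (range T \ F).Nonempty := by
        by_contra h
        rw [Finset.not_nonempty_iff_eq_empty] at h
        rw [h] at hcov; simp [cov] at hcov
      set P := range T \ F with hP
      set m := P.max' hne with hm
      have hmP : m ∈ P := P.max'_mem hne
      have hmT : m < T := by
        have := Finset.mem_sdiff.mp hmP; simpa using this.1
      rcases le_or_gt (2*m+1) d with hbig | hsmall
      · -- pop the max, recurse
        have hPm : P \ {m} = range m \ (F ∩ range m) := by
          ext x
          simp only [Finset.mem_sdiff, Finset.mem_range, Finset.mem_singleton,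
            Finset.mem_inter, hP]
          constructor
          · rintro ⟨⟨hxT, hxF⟩, hxm⟩
            have : x ≤ m := P.le_max' x (by simp [hP, Finset.mem_sdiff, hxT, hxF])
            exact ⟨lt_of_le_of_ne this hxm, fun h => hxF h.1⟩
          · rintro ⟨hxm, hxF⟩
            exact ⟨⟨hxm.trans hmT, fun h => hxF ⟨h, hxm⟩⟩, Nat.ne_of_lt hxm⟩
        have hcovPm : cov (range m \ (F ∩ range m)) + (2*m+1) = cov P := by
          rw [← hPm]
          have := cov_sdiff (Finset.singleton_subset_iff.mpr hmP)
          simpa [cov] using this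
        have hcovmle : 2*m+1 ≤ cov P := by
          refine le_trans ?_ (cov_le_of_subset (Finset.singleton_subset_iff.mpr hmP))
          simp [cov]
        have hcard' : (F ∩ range m).card ≤ F.card :=
          Finset.card_le_card Finset.inter_subset_left
        have hpre : (d - (2*m+1)) + 2*(F ∩ range m).card + 1 ≤ cov (range m \ (F ∩ range m)) := by
          omega
        obtain ⟨A', F', T', hA'sub, hA'lo, hA'hi, hA'eq, hF'sub, hF'card⟩ :=
          ih m hmT (F ∩ range m) (d - (2*m+1)) Finset.inter_subset_right hpre
        have hmA' : m ∉ A' := by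
          intro h
          have := hA'sub h
          rw [Finset.mem_sdiff, Finset.mem_range] at this
          omega
        refine ⟨insert m A', F', T', ?_, ?_, ?_, ?_, hF'sub, by omega⟩
        · intro x hx
          rcases Finset.mem_insert.mp hx with rfl | hx
          · exact hmP
          · exact (Finset.sdiff_subset (s := P) (t := {m})) (hPm ▸ hA'sub hx)
        · rw [cov, Finset.sum_insert hmA', ← cov]; omega
        · rw [cov, Finset.sum_insert hmA', ← cov]; omega
        · rw [← hA'eq, ← hPm]
          ext x
          simp only [Finset.mem_sdiff, Finset.mem_singleton, Finset.mem_insert]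
          tauto
      · -- finisher
        set C := P.filter (fun p => d ≤ 2*p+1) with hC
        have hCne : C.Nonempty := ⟨m, by
          simp only [hC, Finset.mem_filter]
          exact ⟨hmP, by omega⟩⟩
        set r := C.min' hCne with hr
        have hrC : r ∈ C := C.min'_mem hCne
        have hrP : r ∈ P := (Finset.mem_filter.mp hrC).1
        have hrd : d ≤ 2*r+1 := (Finset.mem_filter.mp hrC).2
        have hrT : r < T := by
          have := Finset.mem_sdiff.mp hrP; simpa using this.1
        have hrF : r ∉ F := (Finset.mem_sdiff.mp hrP).2
        have hIco : Finset.Ico (d/2) r ⊆ F := by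
          intro p hp
          rw [Finset.mem_Ico] at hp
          by_contra hpF
          have hpP : p ∈ P := by
            simp only [hP, Finset.mem_sdiff, Finset.mem_range]
            exact ⟨lt_trans hp.2 hrT, hpF⟩
          have hpC : p ∈ C := by
            simp only [hC, Finset.mem_filter]
            exact ⟨hpP, by omega⟩
          have := C.min'_le p hpC
          omega
        have hclimb : r - d/2 ≤ F.card := by
          calc r - d/2 = (Finset.Ico (d/2) r).card := (Nat.card_Ico _ _).symm
          _ ≤ F.card := Finset.card_le_card hIco
        have hd2 : d / 2 * 2 ≤ d := Nat.div_mul_le_self d 2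
        refine ⟨{r}, insert r F, T, by simpa using hrP, ?_, ?_, ?_, ?_, ?_⟩
        · simp only [cov, Finset.sum_singleton]; omega
        · simp only [cov, Finset.sum_singleton]; omega
        · ext x
          simp only [Finset.mem_sdiff, Finset.mem_singleton, Finset.mem_insert,
            Finset.mem_range, hP]
          tauto
        · intro x hx
          rcases Finset.mem_insert.mp hx with rfl | hx
          · simpa using hrT
          · exact hF hx
        · rw [Finset.card_insert_of_notMem hrF]

lemma alloc : ∀ (k : ℕ) (d : Fin k → ℕ) (T : ℕ) (F : Finset ℕ), F ⊆ range T →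
    (∑ i, d i) + 2*F.card*(k-1) + (k-1)^2 ≤ cov (range T \ F) →
    ∃ A : Fin k → Finset ℕ, (∀ i, A i ⊆ range T \ F) ∧
      (∀ i j, i ≠ j → Disjoint (A i) (A j)) ∧ (∀ i, d i ≤ cov (A i)) := by
  intro k
  induction k with
  | zero => intro d T F _ _; exact ⟨fun _ => ∅, fun i => i.elim0, fun i => i.elim0, fun i => i.elim0⟩
  | succ k ihk =>
    intro d T F hF hcov
    rw [Nat.add_sub_cancel] at hcov
    have hsum : (∑ i, d i) = d 0 + ∑ i : Fin k, d i.succ := Fin.sum_univ_succ d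
    rcases Nat.eq_zero_or_pos k with rfl | hk
    · -- single component: give it everything
      norm_num at hcov
      refine ⟨fun _ => range T \ F, fun _ => le_refl _, ?_, ?_⟩
      · intro i j hij; exact absurd (Fin.ext (by omega)) hij
      · intro i
        have hi0 : i = 0 := Fin.ext (by omega)
        subst hi0
        show d 0 ≤ cov (range T \ F)
        have h1 : d 0 ≤ ∑ i, d i :=
          Finset.single_le_sum (f := d) (fun _ _ => Nat.zero_le _) (Finset.mem_univ 0)
        omega
    · obtain ⟨k', rfl⟩ : ∃ k', k = k' + 1 := ⟨k - 1, by omega⟩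
      rcases Nat.eq_zero_or_pos (d 0) with hd0 | hd0
      · -- skip comp 0
        have hprod1 : 2*F.card*(k'+1) = 2*F.card*k' + 2*F.card := by ring
        have hprod2 : (k'+1)^2 = k'^2 + 2*k' + 1 := by ring
        have htail : (∑ i : Fin (k'+1), d i.succ) + 2*F.card*(k'+1-1) + (k'+1-1)^2 ≤
            cov (range T \ F) := by
          rw [Nat.add_sub_cancel]
          omega
        obtain ⟨A', hsub, hdisj, hcov'⟩ := ihk (fun i => d i.succ) T F hF htail
        refine ⟨Fin.cons ∅ A', ?_, ?_, ?_⟩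
        · intro i
          rcases Fin.eq_zero_or_eq_succ i with rfl | ⟨i', rfl⟩
          · simp
          · simpa using hsub i'
        · intro i j hij
          rcases Fin.eq_zero_or_eq_succ i with rfl | ⟨i', rfl⟩ <;>
            rcases Fin.eq_zero_or_eq_succ j with rfl | ⟨j', rfl⟩
          · exact absurd rfl hij
          · simp
          · simp
          · simp only [Fin.cons_succ]
            exact hdisj i' j' (fun h => hij (congrArg Fin.succ h))
        · intro i
          rcases Fin.eq_zero_or_eq_succ i with rfl | ⟨i', rfl⟩
          · simp [hd0]
          · simpa using hcov' i'
      · -- peel comp 0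
        have hk2 : 1 ≤ (k'+1)^2 := Nat.one_le_pow 2 (k'+1) (by omega)
        have h2F : 2*F.card*1 ≤ 2*F.card*(k'+1) := Nat.mul_le_mul_left _ (by omega)
        rw [mul_one] at h2F
        have hpre : d 0 + 2*F.card + 1 ≤ cov (range T \ F) := by omega
        obtain ⟨A0, F', T', hA0sub, hA0lo, hA0hi, heq, hF'sub, hF'card⟩ := peel T F (d 0) hF hpre
        have hA0cov : cov (range T' \ F') + cov A0 = cov (range T \ F) := by
          rw [← heq]; exact cov_sdiff hA0sub
        have hprod1 : 2*F.card*(k'+1) = 2*F.card*k' + 2*F.card := by ring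
        have hprod2 : (k'+1)^2 = k'^2 + 2*k' + 1 := by ring
        have hprod3 : 2*F'.card*k' ≤ 2*F.card*k' + 2*k' := by
          calc 2*F'.card*k' ≤ (2*(F.card+1))*k' :=
                Nat.mul_le_mul_right k' (by omega)
          _ = 2*F.card*k' + 2*k' := by ring
        have htail : (∑ i : Fin (k'+1), d i.succ) + 2*F'.card*(k'+1-1) + (k'+1-1)^2 ≤
            cov (range T' \ F') := by
          rw [Nat.add_sub_cancel]
          omega
        obtain ⟨A', hsub, hdisj, hcov'⟩ := ihk (fun i => d i.succ) T' F' hF'sub htail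
        have hsub' : ∀ i, A' i ⊆ (range T \ F) \ A0 := fun i => heq ▸ hsub i
        refine ⟨Fin.cons A0 A', ?_, ?_, ?_⟩
        · intro i
          rcases Fin.eq_zero_or_eq_succ i with rfl | ⟨i', rfl⟩
          · simpa using hA0sub
          · simp only [Fin.cons_succ]
            exact (hsub' i').trans Finset.sdiff_subset
        · intro i j hij
          rcases Fin.eq_zero_or_eq_succ i with rfl | ⟨i', rfl⟩ <;>
            rcases Fin.eq_zero_or_eq_succ j with rfl | ⟨j', rfl⟩
          · exact absurd rfl hij
          · simp only [Fin.cons_zero, Fin.cons_succ]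
            rw [Finset.disjoint_right]
            intro x hx
            exact (Finset.mem_sdiff.mp (hsub' j' hx)).2
          · simp only [Fin.cons_zero, Fin.cons_succ]
            rw [Finset.disjoint_left]
            intro x hx
            exact (Finset.mem_sdiff.mp (hsub' i' hx)).2
          · simp only [Fin.cons_succ]
            exact hdisj i' j' (fun h => hij (congrArg Fin.succ h))
        · intro i
          rcases Fin.eq_zero_or_eq_succ i with rfl | ⟨i', rfl⟩
          · simpa using hA0lo
          · simpa using hcov' i'


open SimpleGraph


lemma sum_sort_map (A : Finset ℕ) (f : ℕ → ℕ) :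
    ((A.sort (· ≤ ·)).map f).sum = ∑ a ∈ A, f a := by
  rw [← Finset.sum_map_toList]
  exact List.Perm.sum_eq (List.Perm.map f (Finset.sort_perm_toList _ _))

lemma list_cover : ∀ (s : List ℕ) (p : ℕ), p < (s.map (fun r => 2*r+1)).sum →
    ∃ (k : ℕ) (hk : k < s.length), ((s.take k).map (fun r => 2*r+1)).sum ≤ p ∧
      p < ((s.take k).map (fun r => 2*r+1)).sum + (2*s[k]+1) := by
  intro s
  induction s with
  | nil => intro p hp; simp at hp
  | cons r rest ih =>
    intro p hp
    rcases lt_or_ge p (2*r+1) with h | h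
    · exact ⟨0, by simp, by simp, by simpa using h⟩
    · simp only [List.map_cons, List.sum_cons] at hp
      obtain ⟨k, hk, h1, h2⟩ := ih (p - (2*r+1)) (by omega)
      refine ⟨k+1, by simpa using hk, ?_, ?_⟩
      · simp only [List.take_succ_cons, List.map_cons, List.sum_cons]
        omega
      · simp only [List.take_succ_cons, List.map_cons, List.sum_cons, List.getElem_cons_succ]
        omega

variable {V : Type*} {G : SimpleGraph V}

lemma chain_walk {l : List V} (hl : l.Chain' G.Adj) :
    ∀ (jj : ℕ) (hj : jj < l.length) (ii : ℕ) (hij : ii ≤ jj),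
    ∃ w : G.Walk l[ii] l[jj], w.length ≤ jj - ii := by
  intro jj
  induction jj with
  | zero =>
    intro hj ii hij
    have : ii = 0 := by omega
    subst this
    exact ⟨Walk.nil, by simp⟩
  | succ jj ihj =>
    intro hj ii hij
    rcases Nat.eq_or_lt_of_le hij with rfl | hlt
    · exact ⟨Walk.nil, by simp⟩
    · have hij' : ii ≤ jj := by omega
      obtain ⟨w, hw⟩ := ihj (by omega) ii hij'
      have hadj : G.Adj l[jj] l[jj+1] := by
        have := List.isChain_iff_getElem.mp hl jj (by omega)
        simpa [List.get_eq_getElem] using this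
      exact ⟨w.concat hadj, by rw [Walk.length_concat]; omega⟩

lemma reachable_dist_of_chain {l : List V} (hl : l.Chain' G.Adj)
    {a b : ℕ} (ha : a < l.length) (hb : b < l.length) :
    G.Reachable l[a] l[b] ∧ G.dist l[a] l[b] ≤ max a b - min a b := by
  rcases le_total a b with hab | hab
  · obtain ⟨w, hw⟩ := chain_walk hl b hb a hab
    exact ⟨⟨w⟩, by
      rw [max_eq_right hab, min_eq_left hab]
      exact le_trans (SimpleGraph.dist_le w) hw⟩
  · obtain ⟨w, hw⟩ := chain_walk hl a ha b hab
    refine ⟨Reachable.symm ⟨w⟩, ?_⟩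
    rw [max_eq_left hab, min_eq_right hab, SimpleGraph.dist_comm]
    exact le_trans (SimpleGraph.dist_le w) hw

lemma exists_spanning_list [Finite V] (G : SimpleGraph V)
    (hdeg : ∀ v : V, Nat.card (G.neighborSet v) ≤ 2) (c : G.ConnectedComponent) :
    ∃ l : List V, l.Nodup ∧ l.Chain' G.Adj ∧ ∀ v, v ∈ l ↔ G.connectedComponentMk v = c := by
  classical
  cases nonempty_fintype V
  obtain ⟨v₀, hv₀⟩ : ∃ v, G.connectedComponentMk v = c := Quot.exists_rep c
  set S : Set (List V) :=
    {l | l.Nodup ∧ l.Chain' G.Adj ∧ ∀ v ∈ l, G.connectedComponentMk v = c} with hS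
  have hSfin : S.Finite :=
    Set.Finite.subset (List.finite_length_le V (Fintype.card V))
      (fun l hl => hl.1.length_le_card)
  have hv₀S : [v₀] ∈ S := by
    refine ⟨List.nodup_singleton _, List.isChain_singleton _, ?_⟩
    intro v hv
    simp only [List.mem_singleton] at hv
    subst hv; exact hv₀
  have hSne : S.Nonempty := ⟨[v₀], hv₀S⟩
  obtain ⟨l, hlS, hmax⟩ := Set.Finite.exists_maximalFor List.length S hSfin hSne
  obtain ⟨hnodup, hchain, hmem⟩ := hlS
  have hext : ∀ (l' : List V), l' ∈ S → l.length < l'.length → False := by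
    intro l' hl' hlen
    have := hmax hl' (le_of_lt hlen)
    omega
  have hlne : l ≠ [] := by
    intro h
    refine hext [v₀] hv₀S ?_
    rw [h]; simp
  -- any maximal chain list in S absorbs neighbors of its head
  have key : ∀ (m : List V) (hm : m ≠ []), m ∈ S → m.length = l.length →
      ∀ w, G.Adj w (m.head hm) → w ∈ m := by
    intro m hm hmS hlen w hadj
    by_contra hw
    obtain ⟨hmnd, hmch, hmc⟩ := hmS
    refine hext (w :: m) ⟨List.nodup_cons.mpr ⟨hw, hmnd⟩, ?_, ?_⟩ (by simp [hlen])
    · apply List.isChain_cons.mpr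
      refine ⟨?_, hmch⟩
      intro y hy
      rw [List.head?_eq_head hm] at hy
      cases hy
      exact hadj
    · intro v hv
      rcases List.mem_cons.mp hv with rfl | hv
      · rw [ConnectedComponent.sound hadj.reachable]
        exact hmc _ (List.head_mem hm)
      · exact hmc _ hv
  have hlSmem : l ∈ S := ⟨hnodup, hchain, hmem⟩
  have hrevS : l.reverse ∈ S := by
    refine ⟨List.nodup_reverse.mpr hnodup, ?_, ?_⟩
    · refine List.isChain_reverse.mpr (show List.IsChain (flip G.Adj) l from ?_)
      have : (flip G.Adj) = G.Adj := by
        ext x y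
        exact G.adj_comm y x
      rw [this]
      exact hchain
    · intro v hv
      exact hmem v (List.mem_reverse.mp hv)
  have hrevne : l.reverse ≠ [] := by simpa using hlne
  have hhead : ∀ w, G.Adj w (l.head hlne) → w ∈ l :=
    key l hlne hlSmem rfl
  have hlast : ∀ w, G.Adj w (l.getLast hlne) → w ∈ l := by
    intro w hadj
    have := key l.reverse hrevne hrevS (by simp) w ?_
    · exact List.mem_reverse.mp this
    · rw [List.head_reverse]
      exact hadj
  refine ⟨l, hnodup, hchain, fun v => ⟨hmem v, ?_⟩⟩
  intro hv
  by_contra hvl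
  have hreach : G.Reachable (l.head hlne) v := by
    apply ConnectedComponent.exact
    rw [hmem _ (List.head_mem hlne), hv]
  obtain ⟨W⟩ := hreach
  have cross : ∀ {a b : V}, G.Walk a b → a ∈ l → b ∉ l →
      ∃ u w, u ∈ l ∧ w ∉ l ∧ G.Adj u w := by
    intro a b W
    induction W with
    | nil => intro ha hb; exact absurd ha hb
    | @cons x y z h p ih =>
      intro ha hb
      by_cases hy : y ∈ l
      · exact ih hy hb
      · exact ⟨x, y, ha, hy, h⟩
  obtain ⟨u, w, hu, hw, hadj⟩ := cross W (List.head_mem hlne) hvl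
  obtain ⟨i, hi, rfl⟩ := List.mem_iff_getElem.mp hu
  -- i cannot be 0 (head) nor length-1 (last)
  have hi0 : i ≠ 0 := by
    rintro rfl
    apply hw
    apply hhead
    have h0 : l.head hlne = l[0] := List.head_eq_getElem hlne
    rw [h0]
    exact hadj.symm
  have hilast : i ≠ l.length - 1 := by
    intro hieq
    apply hw
    apply hlast
    have h0 : l.getLast hlne = l[l.length - 1] := List.getLast_eq_getElem hlne
    rw [h0]
    have : l[l.length - 1] = l[i] := by
      congr 1
      omega
    rw [this]
    exact hadj.symm
  -- interior vertex has three distinct neighbors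
  have hadj1 : G.Adj l[i-1] l[i] := by
    have h := List.isChain_iff_getElem.mp hchain (i-1) (by omega)
    have e1 : l[i-1+1]'(by omega) = l[i]'hi := by
      congr 1
      omega
    rw [e1] at h
    exact h
  have hadj2 : G.Adj l[i] l[i+1] := by
    have := List.isChain_iff_getElem.mp hchain i (by omega)
    simpa [List.get_eq_getElem] using this
  have hne12 : l[i-1] ≠ l[i+1] := by
    rw [Ne, hnodup.getElem_inj_iff]
    omega
  have hwne1 : w ≠ l[i-1] := fun h => hw (h ▸ List.getElem_mem _)
  have hwne2 : w ≠ l[i+1] := fun h => hw (h ▸ List.getElem_mem _)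
  -- degree bound violated
  have hsub : {l[i-1], l[i+1], w} ⊆ G.neighborFinset l[i] := by
    intro x hx
    rw [SimpleGraph.mem_neighborFinset]
    rcases Finset.mem_insert.mp hx with rfl | hx
    · exact hadj1.symm
    · rcases Finset.mem_insert.mp hx with rfl | hx
      · exact hadj2
      · rw [Finset.mem_singleton] at hx
        subst hx
        exact hadj
  have hcard3 : ({l[i-1], l[i+1], w} : Finset V).card = 3 := by
    rw [Finset.card_insert_of_notMem (by simp [hne12, hwne1.symm]),
      Finset.card_insert_of_notMem (by simp [hwne2.symm]), Finset.card_singleton]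
  have hdeg2 : (G.neighborFinset l[i]).card ≤ 2 := by
    have h1 := hdeg l[i]
    rwa [Nat.card_eq_fintype_card, card_neighborSet_eq_degree] at h1
  have := Finset.card_le_card hsub
  omega

end BurnAux

open SimpleGraph



/-- The closed ball of radius `r` around `v` in the graph metric
(restricted to the connected component of `v`). -/
def SimpleGraph.nball {V : Type*} (G : SimpleGraph V) (v : V) (r : ℕ) : Set V :=
  {u | G.Reachable v u ∧ G.dist v u ≤ r}

/-- `G` can be burned in `M` rounds: its vertices can be covered by closed balls
of radii `M-1, M-2, ..., 0` around some vertices. -/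
def SimpleGraph.burnsIn {V : Type*} (G : SimpleGraph V) (M : ℕ) : Prop :=
  ∃ f : Fin M → V, ∀ u : V, ∃ i : Fin M, u ∈ G.nball (f i) (M - 1 - (i : ℕ))

/-- The burning number of `G`. -/
noncomputable def SimpleGraph.burningNumber {V : Type*} (G : SimpleGraph V) : ℕ :=
  sInf {M | G.burnsIn M}

/-- A path-forest: every connected component is a path, equivalently the graph is
acyclic and every vertex has degree at most `2`. -/
def SimpleGraph.IsPathForest {V : Type*} (G : SimpleGraph V) : Prop :=
  G.IsAcyclic ∧ ∀ v : V, Nat.card (G.neighborSet v) ≤ 2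

/-- If `G` is a path-forest of order `n` with `t ≤ ⌈√n⌉` components, then
`b(G) ≤ ⌈√n + (t - 1)/2⌉`. -/
theorem pathForest_burningNumber_le' {V : Type*} [Finite V]
    (G : SimpleGraph V) (hG : G.IsPathForest)
    (ht : Nat.card G.ConnectedComponent ≤ ⌈Real.sqrt (Nat.card V)⌉₊) :
    G.burningNumber ≤
      ⌈Real.sqrt (Nat.card V) + ((Nat.card G.ConnectedComponent : ℝ) - 1) / 2⌉₊ := by
  classical
  cases nonempty_fintype V
  cases nonempty_fintype G.ConnectedComponent
  set n := Nat.card V with hn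
  set t := Nat.card G.ConnectedComponent with htdef
  set M := ⌈Real.sqrt n + ((t : ℝ) - 1) / 2⌉₊ with hM
  refine Nat.sInf_le ?_
  show G.burnsIn M
  rcases Nat.eq_zero_or_pos t with ht0 | htpos
  · -- no components: V is empty
    have hempty : IsEmpty G.ConnectedComponent := by
      rcases Nat.card_eq_zero.mp ht0 with h | h
      · exact h
      · exact absurd h (not_infinite_iff_finite.mpr inferInstance)
    have hVempty : IsEmpty V := ⟨fun v => hempty.false (G.connectedComponentMk v)⟩
    have hn0 : n = 0 := by rw [hn]; exact Nat.card_of_isEmpty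
    have hM0 : M = 0 := by
      rw [hM, ht0, hn0]
      apply Nat.ceil_eq_zero.mpr
      norm_num
    rw [hM0]
    exact ⟨fun i => i.elim0, fun u => (hVempty.false u).elim⟩
  · obtain ⟨c₀⟩ : Nonempty G.ConnectedComponent := (Nat.card_pos_iff.mp htpos).1
    obtain ⟨v₀, hv₀⟩ := Quot.exists_rep c₀
    have hVne : Nonempty V := ⟨v₀⟩
    have hnpos : 0 < n := by rw [hn]; exact Nat.card_pos
    -- spanning lists
    choose L hLnd hLch hLmem using fun c => BurnAux.exists_spanning_list G hG.2 c
    set e : G.ConnectedComponent ≃ Fin t := Finite.equivFin _ with he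
    set d : Fin t → ℕ := fun j => (L (e.symm j)).length with hd
    have hfiber : ∀ cc : G.ConnectedComponent,
        (Finset.univ.filter (fun v => G.connectedComponentMk v = cc)).card = (L cc).length := by
      intro cc
      rw [← List.toFinset_card_of_nodup (hLnd cc)]
      congr 1
      ext v
      simp [List.mem_toFinset, hLmem]
    have hsum : ∑ j, d j = n := by
      have h1 : ∑ j : Fin t, (L (e.symm j)).length = ∑ cc, (L cc).length :=
        Equiv.sum_comp e.symm (fun cc => (L cc).length)
      have h2 : ∑ cc, (L cc).length = Fintype.card V := by
        rw [← Finset.card_univ,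
          Finset.card_eq_sum_card_fiberwise (f := G.connectedComponentMk)
            (t := Finset.univ) (fun x _ => Finset.mem_univ _)]
        exact Finset.sum_congr rfl (fun cc _ => (hfiber cc).symm)
      rw [hd]
      rw [h1, h2, hn, Nat.card_eq_fintype_card]
    -- numeric inequality
    have hineq : n + (t - 1)^2 ≤ M^2 := by
      have hsq : Real.sqrt n ^ 2 = n := Real.sq_sqrt (by positivity)
      have h1 : (t : ℝ) - 1 < Real.sqrt n := by
        have h2 : (t:ℝ) ≤ (⌈Real.sqrt n⌉₊ : ℝ) := Nat.cast_le.mpr ht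
        have h3 : (⌈Real.sqrt n⌉₊ : ℝ) < Real.sqrt n + 1 :=
          Nat.ceil_lt_add_one (Real.sqrt_nonneg _)
        linarith
      have h2 : Real.sqrt n + ((t:ℝ)-1)/2 ≤ (M:ℝ) := Nat.le_ceil _
      have ht1 : (1:ℝ) ≤ (t:ℝ) := by exact_mod_cast htpos
      have hx : (0:ℝ) ≤ Real.sqrt n + ((t:ℝ)-1)/2 := by
        have := Real.sqrt_nonneg (n:ℝ)
        linarith
      have hsq2 : (Real.sqrt n + ((t:ℝ)-1)/2)^2 ≤ (M:ℝ)^2 := by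
        apply pow_le_pow_left₀ hx h2
      have hprod : ((t:ℝ)-1)*((t:ℝ)-1) ≤ ((t:ℝ)-1)*Real.sqrt n :=
        mul_le_mul_of_nonneg_left h1.le (by linarith)
      have hR : (n:ℝ) + ((t:ℝ)-1)^2 ≤ (M:ℝ)^2 := by nlinarith [hsq, hsq2, hprod]
      have hcast : ((t - 1 : ℕ) : ℝ) = (t:ℝ) - 1 := by
        rw [Nat.cast_sub htpos, Nat.cast_one]
      rw [← hcast] at hR
      exact_mod_cast hR
    -- allocation of radii to components
    obtain ⟨A, hAsub, hAdisj, hAcov⟩ := BurnAux.alloc t d M ∅ (by simp) (by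
      rw [Finset.sdiff_empty, BurnAux.cov_range]
      simpa [hsum] using hineq)
    -- the burning function
    set ctr : G.ConnectedComponent → ℕ → V := fun cc r =>
      let l := L cc
      let s := (A (e cc)).sort (· ≤ ·)
      l.getD (min ((((s.take (List.idxOf r s))).map (fun x => 2*x+1)).sum + r)
        (l.length - 1)) v₀ with hctr
    set f : Fin M → V := fun i =>
      if h : ∃ j, (M - 1 - (i : ℕ)) ∈ A j then ctr (e.symm h.choose) (M - 1 - (i:ℕ)) else v₀
      with hf
    refine ⟨f, ?_⟩
    intro u
    set cc := G.connectedComponentMk u with hcc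
    set l := L cc with hl
    have hul : u ∈ l := (hLmem cc u).mpr rfl
    have hlen : d (e cc) = l.length := by
      rw [hd]
      simp [Equiv.symm_apply_apply, hl]
    set s := (A (e cc)).sort (· ≤ ·) with hs
    have hsnd : s.Nodup := Finset.sort_nodup _ _
    have hsum2 : (s.map (fun x => 2*x+1)).sum = BurnAux.cov (A (e cc)) :=
      BurnAux.sum_sort_map _ _
    set p := List.idxOf u l with hpdef
    have hp : p < l.length := List.idxOf_lt_length_iff.mpr hul
    have hpl : l[p] = u := List.getElem_idxOf hp
    have hplen : p < (s.map (fun x => 2*x+1)).sum := by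
      rw [hsum2]
      calc p < l.length := hp
      _ = d (e cc) := hlen.symm
      _ ≤ BurnAux.cov (A (e cc)) := hAcov _
    obtain ⟨k, hk, hk1, hk2⟩ := BurnAux.list_cover s p hplen
    set r := s[k] with hr
    have hrA : r ∈ A (e cc) := by
      rw [← Finset.mem_sort (α := ℕ) (· ≤ ·)]
      exact List.getElem_mem hk
    have hrM : r < M := by
      have h1 := hAsub (e cc) hrA
      rw [Finset.sdiff_empty, Finset.mem_range] at h1
      exact h1
    have hrM1 : M - 1 - r < M := by omega
    refine ⟨⟨M - 1 - r, hrM1⟩, ?_⟩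
    set i₀ : Fin M := ⟨M - 1 - r, hrM1⟩ with hi₀
    have hrad : M - 1 - (i₀ : ℕ) = r := by
      rw [hi₀]
      simp only []
      omega
    rw [hrad]
    -- identify the value of f
    have hex : ∃ j, (M - 1 - (i₀ : ℕ)) ∈ A j := by
      rw [hrad]; exact ⟨e cc, hrA⟩
    have hchoose : hex.choose = e cc := by
      by_contra hne
      have h1 := hex.choose_spec
      have h2 : (M - 1 - (i₀ : ℕ)) ∈ A (e cc) := by
        rw [hrad]; exact hrA
      exact Finset.disjoint_left.mp (hAdisj _ _ hne) h1 h2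
    have hfval : f i₀ = ctr cc r := by
      rw [hf]
      simp only []
      rw [dif_pos hex, hchoose, hrad, Equiv.symm_apply_apply]
    rw [hfval]
    -- the center position
    have hidx : List.idxOf r s = k := List.Nodup.idxOf_getElem hsnd k hk
    set pfx := ((s.take k).map (fun x => 2*x+1)).sum with hpfx
    set cpos := min (pfx + r) (l.length - 1) with hcpos
    have hcposlt : cpos < l.length := by
      have : l.length - 1 < l.length := by omega
      omega
    have hctrval : ctr cc r = l[cpos] := by
      rw [hctr]
      simp only []
      rw [hidx]
      exact List.getD_eq_getElem _ _ hcposlt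
    rw [hctrval]
    -- distance bound
    obtain ⟨hreach, hdist⟩ := BurnAux.reachable_dist_of_chain (hLch cc) hcposlt hp
    constructor
    · rw [← hpl]; exact hreach
    · rw [← hpl]
      refine le_trans hdist ?_
      rcases min_cases (pfx + r) (l.length - 1) with ⟨hmin, hcase⟩ | ⟨hmin, hcase⟩ <;>
        rw [hcpos, hmin] <;>
        rcases le_total (min (pfx + r) (l.length - 1)) p with h | h <;>
        omega
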